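/- arXiv:2202.01185 — 2 statements merged into one kernel-verified Lean document; each statement's English description precedes it below -/
import Mathlib

section
/- For α > 0, the scalar curvature function R_α satisfies lim_{r→0⁺} R_α(r) = 12/α²; that is, R_α tends to 12/α² as r approaches 0 from the right. -/
open Real

/-- Warping function `φ_α(r) = α · arctan(r/α)`. -/
noncomputable def warp (α : ℝ) : ℝ → ℝ := fun r => α * arctan (r / α)

/-- Scalar curvature of the rotationally symmetric metric `dr² + φ_α(r)² g_{S²}`:
`R_α(r) = 2(−2φ_α''(r)/φ_α(r) + (1 − φ_α'(r)²)/φ_α(r)²)`. -/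
noncomputable def scalarCurv (α : ℝ) : ℝ → ℝ := fun r =>
  2 * (-2 * deriv (deriv (warp α)) r / warp α r
        + (1 - (deriv (warp α) r) ^ 2) / (warp α r) ^ 2)

lemma warp_hasDerivAt (α : ℝ) (hα : 0 < α) (r : ℝ) :
    HasDerivAt (warp α) (α ^ 2 / (α ^ 2 + r ^ 2)) r := by
  have h1 : HasDerivAt (fun x : ℝ => x / α) (1 / α) r := (hasDerivAt_id r).div_const α
  have h2 := (Real.hasDerivAt_arctan (r / α)).comp r h1
  have h3 := h2.const_mul α
  refine h3.congr_deriv ?_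
  have h4 : (1 : ℝ) + (r / α) ^ 2 ≠ 0 := by positivity
  field_simp

lemma warp_deriv2 (α : ℝ) (hα : 0 < α) (r : ℝ) :
    HasDerivAt (fun x : ℝ => α ^ 2 / (α ^ 2 + x ^ 2))
      (-2 * α ^ 2 * r / (α ^ 2 + r ^ 2) ^ 2) r := by
  have hden : (0 : ℝ) < α ^ 2 + r ^ 2 := by positivity
  have hd : HasDerivAt (fun x : ℝ => α ^ 2 + x ^ 2) (2 * r) r := by
    have := ((hasDerivAt_id r).pow 2).const_add (α ^ 2)
    simpa using this
  have := (hasDerivAt_const r (α ^ 2)).div hd hden.ne'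
  refine this.congr_deriv ?_
  ring

open Filter Topology in
/-- `R_α(r) → 12/α²` as `r → 0⁺`. -/
theorem stmt_3 (α : ℝ) (hα : 0 < α) :
    Filter.Tendsto (scalarCurv α) (nhdsWithin 0 (Set.Ioi 0)) (nhds (12 / α ^ 2)) := by
  have hα4 : (α : ℝ) ^ 4 ≠ 0 := by positivity
  -- arctan x / x → 1 as x → 0, x ≠ 0
  have harc : Tendsto (fun x : ℝ => arctan x / x) (𝓝[≠] (0:ℝ)) (𝓝 1) := by
    have h := Real.hasDerivAt_arctan 0
    rw [hasDerivAt_iff_tendsto_slope] at h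
    norm_num at h
    refine h.congr fun x => ?_
    simp [slope_def_field]
  have harc' : Tendsto (fun x : ℝ => x / arctan x) (𝓝[≠] (0:ℝ)) (𝓝 1) := by
    have := harc.inv₀ one_ne_zero
    simpa [inv_div] using this
  have hmap : Tendsto (fun r : ℝ => r / α) (𝓝[>] (0:ℝ)) (𝓝[≠] (0:ℝ)) := by
    rw [tendsto_nhdsWithin_iff]
    constructor
    · have : Tendsto (fun r : ℝ => r / α) (𝓝 0) (𝓝 (0 / α)) :=
        (continuous_id.div_const α).tendsto 0
      simpa using this.mono_left nhdsWithin_le_nhds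
    · filter_upwards [self_mem_nhdsWithin] with r hr
      have : (0:ℝ) < r / α := div_pos hr hα
      exact this.ne'
  have ht : Tendsto (fun r : ℝ => r / warp α r) (𝓝[>] (0:ℝ)) (𝓝 1) := by
    refine (harc'.comp hmap).congr fun r => ?_
    simp only [Function.comp, warp, div_div]
  have hr0 : Tendsto (fun r : ℝ => r) (𝓝[>] (0:ℝ)) (𝓝 0) :=
    tendsto_id.mono_left nhdsWithin_le_nhds
  have hD : Tendsto (fun r : ℝ => (α ^ 2 + r ^ 2) ^ 2) (𝓝[>] (0:ℝ)) (𝓝 (α ^ 4)) := by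
    have h : Tendsto (fun r : ℝ => (α ^ 2 + r ^ 2) ^ 2) (𝓝 (0:ℝ)) (𝓝 ((α ^ 2 + 0 ^ 2) ^ 2)) := by
      exact (Continuous.tendsto (by continuity) 0)
    have := h.mono_left (nhdsWithin_le_nhds (s := Set.Ioi (0:ℝ)))
    convert this using 2
    ring
  have hN : Tendsto (fun r : ℝ => 2 * α ^ 2 + r ^ 2) (𝓝[>] (0:ℝ)) (𝓝 (2 * α ^ 2)) := by
    have h : Tendsto (fun r : ℝ => 2 * α ^ 2 + r ^ 2) (𝓝 (0:ℝ)) (𝓝 (2 * α ^ 2 + 0 ^ 2)) :=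
      (Continuous.tendsto (by continuity) 0)
    have := h.mono_left (nhdsWithin_le_nhds (s := Set.Ioi (0:ℝ)))
    convert this using 2
    ring
  have key : Tendsto (fun r : ℝ =>
      2 * (4 * α ^ 2 * (r / warp α r) / (α ^ 2 + r ^ 2) ^ 2
        + (r / warp α r) ^ 2 * (2 * α ^ 2 + r ^ 2) / (α ^ 2 + r ^ 2) ^ 2))
      (𝓝[>] (0:ℝ))
      (𝓝 (2 * (4 * α ^ 2 * 1 / α ^ 4 + 1 ^ 2 * (2 * α ^ 2) / α ^ 4))) := by
    exact (((tendsto_const_nhds.mul ht).div hD hα4).add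
      (((ht.pow 2).mul hN).div hD hα4)).const_mul 2
  have hval : 2 * (4 * α ^ 2 * 1 / α ^ 4 + 1 ^ 2 * (2 * α ^ 2) / α ^ 4) = 12 / α ^ 2 := by
    field_simp
    ring
  rw [hval] at key
  refine key.congr' ?_
  filter_upwards [self_mem_nhdsWithin] with r hr
  have hrp : (0:ℝ) < r := hr
  have hw : 0 < warp α r := mul_pos hα (by rw [show (0:ℝ) = arctan 0 by simp]; exact Real.arctan_strictMono (div_pos hrp hα))
  have hden : (0:ℝ) < α ^ 2 + r ^ 2 := by positivity
  have hd1 : deriv (warp α) r = α ^ 2 / (α ^ 2 + r ^ 2) := (warp_hasDerivAt α hα r).deriv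
  have hfun : deriv (warp α) = fun x : ℝ => α ^ 2 / (α ^ 2 + x ^ 2) :=
    funext fun x => (warp_hasDerivAt α hα x).deriv
  have hd2 : deriv (deriv (warp α)) r = -2 * α ^ 2 * r / (α ^ 2 + r ^ 2) ^ 2 := by
    rw [hfun]
    exact (warp_deriv2 α hα r).deriv
  rw [scalarCurv]
  rw [hd1, hd2]
  field_simp
  ring
end

section
/- For α > 0 and every r > 0, the scalar curvature satisfies the strict lower bound R_α(r) > 8/(π²α²). -/
open Real

lemma hasDerivAt_warp (α : ℝ) (hα : α ≠ 0) (r : ℝ) :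
    HasDerivAt (warp α) (α ^ 2 / (α ^ 2 + r ^ 2)) r := by
  have h1 : HasDerivAt (fun x : ℝ => x / α) (1 / α) r := by
    simpa using (hasDerivAt_id r).div_const α
  have h2 := (Real.hasDerivAt_arctan (r / α)).comp r h1
  have h3 := h2.const_mul α
  refine h3.congr_deriv ?_
  have h4 : α ^ 2 + r ^ 2 ≠ 0 := by positivity
  field_simp

lemma deriv_warp (α : ℝ) (hα : α ≠ 0) :
    deriv (warp α) = fun r => α ^ 2 / (α ^ 2 + r ^ 2) :=
  funext fun r => (hasDerivAt_warp α hα r).deriv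

lemma hasDerivAt_deriv_warp (α : ℝ) (hα : α ≠ 0) (r : ℝ) :
    HasDerivAt (deriv (warp α)) (-(2 * r * α ^ 2) / (α ^ 2 + r ^ 2) ^ 2) r := by
  rw [deriv_warp α hα]
  have h4 : α ^ 2 + r ^ 2 ≠ 0 := by positivity
  have h1 : HasDerivAt (fun x : ℝ => α ^ 2 + x ^ 2) (2 * r) r := by
    simpa using ((hasDerivAt_pow 2 r).const_add (α ^ 2))
  have h2 := (h1.inv h4).const_mul (α ^ 2)
  simp only [div_eq_mul_inv]
  refine h2.congr_deriv ?_
  field_simp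

lemma arctan_lt_self {x : ℝ} (hx : 0 < x) : arctan x < x := by
  have h1 : 0 < arctan x := by
    have := Real.arctan_strictMono hx
    simpa using this
  have h2 := Real.lt_tan h1 (Real.arctan_lt_pi_div_two x)
  rwa [Real.tan_arctan] at h2

/-- For `α > 0` and every `r > 0`, the scalar curvature satisfies `R_α(r) > 8/(π²α²)`. -/
theorem stmt_4 (α : ℝ) (hα : 0 < α) (r : ℝ) (hr : 0 < r) :
    scalarCurv α r > 8 / (π ^ 2 * α ^ 2) := by
  have hα' : α ≠ 0 := ne_of_gt hα
  have hd1 : deriv (warp α) r = α ^ 2 / (α ^ 2 + r ^ 2) := (hasDerivAt_warp α hα' r).deriv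
  have hd2 : deriv (deriv (warp α)) r = -(2 * r * α ^ 2) / (α ^ 2 + r ^ 2) ^ 2 :=
    (hasDerivAt_deriv_warp α hα' r).deriv
  set a := arctan (r / α) with ha_def
  have ha0 : 0 < a := by
    have := Real.arctan_strictMono (div_pos hr hα)
    rw [ha_def]
    simpa using this
  have haπ : a < π / 2 := Real.arctan_lt_pi_div_two _
  have har' : a < r / α := arctan_lt_self (div_pos hr hα)
  have har : α * a < r := by
    rw [mul_comm]
    exact (lt_div_iff₀ hα).mp har'
  have hπ : 0 < π := Real.pi_pos
  have hD : (0:ℝ) < α ^ 2 + r ^ 2 := by positivity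
  have hw : warp α r = α * a := rfl
  have hE : scalarCurv α r =
      2 * (4 * r * α ^ 2 * (α * a) + ((α ^ 2 + r ^ 2) ^ 2 - α ^ 4)) /
        ((α ^ 2 + r ^ 2) ^ 2 * (α * a) ^ 2) := by
    unfold scalarCurv
    rw [hd1, hd2, hw]
    have hA : α * a ≠ 0 := by positivity
    field_simp
    ring
  rw [gt_iff_lt, hE, div_lt_div_iff₀ (by positivity) (by positivity)]
  -- reduce to polynomial inequality
  have key1 : 0 < (π * α - 2 * (α * a)) * (π * α + 2 * (α * a)) * ((α ^ 2 + r ^ 2) ^ 2 - α ^ 4) := by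
    have t1 : 0 < π * α - 2 * (α * a) := by nlinarith
    have t2 : 0 < π * α + 2 * (α * a) := by positivity
    have t3 : 0 < (α ^ 2 + r ^ 2) ^ 2 - α ^ 4 := by
      nlinarith [mul_pos (mul_pos hr hr) (mul_pos hα hα), mul_pos (mul_pos hr hr) (mul_pos hr hr)]
    positivity
  have key2 : 0 < 4 * (α * a) ^ 2 * α ^ 4 * (π ^ 2 - 1) := by
    have h3 : (3:ℝ) < π := Real.pi_gt_three
    have hπ2 : 0 < π ^ 2 - 1 := by nlinarith
    exact mul_pos (by positivity) hπ2
  have key3 : 0 < 4 * π ^ 2 * α ^ 4 * (α * a) * (r - α * a) := by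
    have : 0 < r - α * a := by linarith
    positivity
  nlinarith [key1, key2, key3]
end
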